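/- Let f ∈ (0,1) and let p, q ≥ 2 be integers. For every (s_1, s_2) ∈ D_f^{p,q}, the periodic extension π̃(r) := π_{f,s_1,s_2}^{p,q}(r − ⌊r⌋) is a valid cut generating function for f: π̃ is nonnegative, π̃(0) = 0, π̃(f) = 1, π̃ is subadditive (π̃(r + r') ≤ π̃(r) + π̃(r') for all r, r' ∈ ℝ), and π̃(r + w) = π̃(r) for all r ∈ ℝ and w ∈ ℤ. -/

import Mathlib

/-- The one-dimensional Gomory–Johnson style cut generating function
`π_{f,s₁,s₂}^{p,q}(r)`, the maximum of `min(φ_i^1(r), φ_i^2(r))` for `i = 1,…,p`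
and `min(ψ_j^1(r), ψ_j^2(r))` for `j = 1,…,q-1`. -/
noncomputable def piPQ (f s₁ s₂ : ℝ) (p q : ℕ) (r : ℝ) : ℝ :=
  sSup (((fun i : ℕ => min (s₁ * r + (i : ℝ) * (1 - f * s₁) / (p : ℝ))
            (s₂ * r + ((i : ℝ) - 1) * (1 - f * s₂) / ((p : ℝ) - 1))) '' Set.Icc 1 p) ∪
        ((fun j : ℕ => min (s₁ * (r - 1) + ((j : ℝ) - 1) * (1 + (1 - f) * s₁) / ((q : ℝ) - 1))
            (s₂ * (r - 1) + (j : ℝ) * (1 + (1 - f) * s₂) / (q : ℝ))) '' Set.Icc 1 (q - 1)))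

/-- The parameter domain `D_f^{p,q}` of valid slope pairs `(s₁, s₂)`. -/
noncomputable def Dset (f : ℝ) (p q : ℕ) : Set (ℝ × ℝ) :=
  (if ((p : ℝ) + q - 1) * f - p < 0 then
      Set.Icc (((p : ℝ) + q - 1) / (((p : ℝ) + q - 1) * f - p)) (1 / (f - 1))
    else Set.Iic (1 / (f - 1))) ×ˢ
  (if ((p : ℝ) + q - 1) * (1 - f) - q < 0 then
      Set.Icc (1 / f) (((p : ℝ) + q - 1) / ((q : ℝ) - ((p : ℝ) + q - 1) * (1 - f)))
    else Set.Ici (1 / f))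



open Finset

namespace GJaux

/-- workhorse: compare window sums. -/
lemma sum_win_le (g h : ℕ → ℝ) {s S : ℕ} (hs : s ≤ S)
    (hgh : ∀ i, i < s → g i ≤ h i) (hh : ∀ i, 0 ≤ h i) :
    ∑ i ∈ range s, g i ≤ ∑ i ∈ range S, h i := by
  calc ∑ i ∈ range s, g i ≤ ∑ i ∈ range s, h i :=
        Finset.sum_le_sum (fun i hi => hgh i (Finset.mem_range.mp hi))
    _ ≤ ∑ i ∈ range S, h i := by
        apply Finset.sum_le_sum_of_subset_of_nonneg
        · exact Finset.range_subset_range.mpr hs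
        · exact fun i _ _ => hh i

lemma key_aux (u w : ℕ → ℝ) (N : ℕ)
    (hu_nn : ∀ i, 0 ≤ u i) (hu_anti : ∀ i j, i ≤ j → u j ≤ u i) (hu_last : u (N-1) = 0)
    (hw_nn : ∀ i, 0 ≤ w i) (hw_mono : ∀ i j, i ≤ j → w i ≤ w j) (hw0 : w 0 = 0)
    (l₁ l₂ k τ : ℕ) (hl₁N : l₁ + 1 ≤ N) (hl₂N : l₂ + 1 ≤ N)
    (hk1 : 1 ≤ k) (hkN : k + 1 ≤ N) (hτ : τ ≤ 1) (hle : l₂ ≤ l₁) :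
    (∑ i ∈ range k, u i) + (τ:ℝ) * (∑ i ∈ range N, u i)
        ≤ (∑ i ∈ range l₁, u i) + (∑ i ∈ range l₂, u i)
    ∨ (∑ i ∈ range (l₁+1), w i) + (∑ i ∈ range (l₂+1), w i)
        ≤ (∑ i ∈ range k, w i) + (τ:ℝ) * (∑ i ∈ range N, w i) := by
  interval_cases τ
  · -- τ = 0
    push_cast
    rw [zero_mul, zero_mul, add_zero, add_zero]
    by_cases hsplit : k ≤ l₁ + l₂
    · left
      rcases le_or_gt k l₁ with hkl | hkl
      · have h1 : ∑ i ∈ range k, u i ≤ ∑ i ∈ range l₁, u i :=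
          sum_win_le u u hkl (fun i _ => le_refl _) hu_nn
        have h2 : (0:ℝ) ≤ ∑ i ∈ range l₂, u i :=
          Finset.sum_nonneg (fun i _ => hu_nn i)
        linarith
      · obtain ⟨m, hm⟩ := Nat.exists_eq_add_of_le hkl.le
        have e1 : ∑ i ∈ range k, u i
            = ∑ i ∈ range l₁, u i + ∑ i ∈ range m, u (l₁ + i) := by
          rw [hm, Finset.sum_range_add]
        have h1 : ∑ i ∈ range m, u (l₁ + i) ≤ ∑ i ∈ range l₂, u i :=
          sum_win_le _ _ (by omega) (fun i _ => hu_anti i (l₁+i) (by omega)) hu_nn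
        linarith
    · right
      rcases Nat.eq_zero_or_pos l₂ with rfl | hl₂pos
      · have h1 : ∑ i ∈ range (l₁+1), w i ≤ ∑ i ∈ range k, w i :=
          sum_win_le w w (by omega) (fun i _ => le_refl _) hw_nn
        have h2 : ∑ i ∈ range (0+1), w i = 0 := by simp [hw0]
        linarith
      · obtain ⟨m, hm⟩ := Nat.exists_eq_add_of_le (show l₁ + 1 ≤ k by omega)
        have e1 : ∑ i ∈ range k, w i
            = ∑ i ∈ range (l₁+1), w i + ∑ i ∈ range m, w (l₁ + 1 + i) := by
          rw [hm, Finset.sum_range_add]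
        have e2 : ∑ i ∈ range (l₂+1), w i = ∑ i ∈ range l₂, w (1 + i) := by
          rw [Finset.sum_range_succ']
          simp [hw0, add_comm]
        have h2 : ∑ i ∈ range l₂, w (1 + i) ≤ ∑ i ∈ range m, w (l₁ + 1 + i) :=
          sum_win_le _ _ (by omega) (fun i _ => hw_mono (1+i) (l₁+1+i) (by omega))
            (fun i => hw_nn _)
        linarith
  · -- τ = 1
    push_cast
    rw [one_mul, one_mul]
    by_cases hsplit : k + N ≤ l₁ + l₂ + 1
    · left
      obtain ⟨N', rfl⟩ : ∃ N', N = N' + 1 := ⟨N - 1, by omega⟩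
      simp only [Nat.add_sub_cancel] at hu_last
      have hkl₂ : k ≤ l₂ := by omega
      obtain ⟨m, hm⟩ := Nat.exists_eq_add_of_le hkl₂
      obtain ⟨M, hM⟩ := Nat.exists_eq_add_of_le (show l₁ ≤ N' by omega)
      have e1 : ∑ i ∈ range (N'+1), u i = ∑ i ∈ range N', u i := by
        rw [Finset.sum_range_succ, hu_last, add_zero]
      have e2 : ∑ i ∈ range N', u i
          = ∑ i ∈ range l₁, u i + ∑ i ∈ range M, u (l₁ + i) := by
        rw [hM, Finset.sum_range_add]
      have e3 : ∑ i ∈ range l₂, u i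
          = ∑ i ∈ range k, u i + ∑ i ∈ range m, u (k + i) := by
        rw [hm, Finset.sum_range_add]
      have h4 : ∑ i ∈ range M, u (l₁ + i) ≤ ∑ i ∈ range m, u (k + i) :=
        sum_win_le _ _ (by omega) (fun i _ => hu_anti (k+i) (l₁+i) (by omega))
          (fun i => hu_nn _)
      have h5 : (0:ℝ) ≤ ∑ i ∈ range l₁, u i := Finset.sum_nonneg (fun i _ => hu_nn i)
      linarith
    · right
      rcases le_or_gt (l₂ + 1) k with hkl | hkl
      · have h1 : ∑ i ∈ range (l₂+1), w i ≤ ∑ i ∈ range k, w i :=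
          sum_win_le w w hkl (fun i _ => le_refl _) hw_nn
        have h2 : ∑ i ∈ range (l₁+1), w i ≤ ∑ i ∈ range N, w i :=
          sum_win_le w w (by omega) (fun i _ => le_refl _) hw_nn
        linarith
      · obtain ⟨m, hm⟩ := Nat.exists_eq_add_of_le (show k ≤ l₂ + 1 by omega)
        have e3 : ∑ i ∈ range (l₂+1), w i
            = ∑ i ∈ range k, w i + ∑ i ∈ range m, w (k + i) := by
          rw [hm, Finset.sum_range_add]
        obtain ⟨M, hM⟩ := Nat.exists_eq_add_of_le (show l₁ + 1 ≤ N by omega)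
        obtain ⟨M', hM'⟩ : ∃ M', M = M' + m := ⟨M - m, by omega⟩
        have e4a : ∑ i ∈ range N, w i
            = ∑ i ∈ range (l₁+1), w i + ∑ i ∈ range (M'+m), w (l₁ + 1 + i) := by
          rw [hM, hM']; exact Finset.sum_range_add _ _ _
        have e4b : ∑ i ∈ range (M'+m), w (l₁ + 1 + i)
            = ∑ i ∈ range M', w (l₁ + 1 + i) + ∑ i ∈ range m, w (l₁ + 1 + (M' + i)) :=
          Finset.sum_range_add _ _ _
        have e4 : ∑ i ∈ range N, w i
            = ∑ i ∈ range (l₁+1), w i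
              + (∑ i ∈ range M', w (l₁ + 1 + i) + ∑ i ∈ range m, w (l₁ + 1 + (M' + i))) := by
          rw [e4a, e4b]
        have h6 : ∑ i ∈ range m, w (k + i) ≤ ∑ i ∈ range m, w (l₁ + 1 + (M' + i)) :=
          Finset.sum_le_sum (fun i _ => hw_mono (k+i) (l₁+1+(M'+i)) (by omega))
        have h7 : (0:ℝ) ≤ ∑ i ∈ range M', w (l₁ + 1 + i) :=
          Finset.sum_nonneg (fun i _ => hw_nn _)
        linarith


lemma key (u w : ℕ → ℝ) (N : ℕ)
    (hu_nn : ∀ i, 0 ≤ u i) (hu_anti : ∀ i j, i ≤ j → u j ≤ u i) (hu_last : u (N-1) = 0)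
    (hw_nn : ∀ i, 0 ≤ w i) (hw_mono : ∀ i j, i ≤ j → w i ≤ w j) (hw0 : w 0 = 0)
    (l₁ l₂ k τ : ℕ) (hl₁N : l₁ + 1 ≤ N) (hl₂N : l₂ + 1 ≤ N)
    (hk1 : 1 ≤ k) (hkN : k + 1 ≤ N) (hτ : τ ≤ 1) :
    (∑ i ∈ range k, u i) + (τ:ℝ) * (∑ i ∈ range N, u i)
        ≤ (∑ i ∈ range l₁, u i) + (∑ i ∈ range l₂, u i)
    ∨ (∑ i ∈ range (l₁+1), w i) + (∑ i ∈ range (l₂+1), w i)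
        ≤ (∑ i ∈ range k, w i) + (τ:ℝ) * (∑ i ∈ range N, w i) := by
  rcases le_total l₂ l₁ with h | h
  · exact key_aux u w N hu_nn hu_anti hu_last hw_nn hw_mono hw0 l₁ l₂ k τ hl₁N hl₂N hk1 hkN hτ h
  · rcases key_aux u w N hu_nn hu_anti hu_last hw_nn hw_mono hw0 l₂ l₁ k τ hl₂N hl₁N hk1 hkN hτ h
      with h' | h'
    · left; linarith
    · right; linarith


noncomputable section

lemma sum_const_eq {c : ℝ} {n : ℕ} (g : ℕ → ℝ) (h : ∀ i, i < n → g i = c) :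
    ∑ i ∈ range n, g i = n * c := by
  rw [Finset.sum_congr rfl (fun i hi => h i (Finset.mem_range.mp hi)),
    Finset.sum_const, Finset.card_range, nsmul_eq_mul]

variable (f s₁ s₂ : ℝ) (p q : ℕ)

/-- step sequence for the `s₁`-intercepts -/
def uS : ℕ → ℝ := fun i =>
  if i < p then (1 - f*s₁)/p else if i + 1 < p + q then (-(1+(1-f)*s₁))/((q:ℝ)-1) else 0

/-- step sequence for the `s₂`-intercepts -/
def wS : ℕ → ℝ := fun i =>
  if i = 0 then 0 else if i < p then (f*s₂-1)/((p:ℝ)-1) else (1+(1-f)*s₂)/q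

def etaF (t : ℕ) : ℝ := ∑ i ∈ range t, uS f s₁ p q i

def gamF (t : ℕ) : ℝ := -∑ i ∈ range t, wS f s₂ p q i

def betaF (t : ℕ) : ℝ := (etaF f s₁ p q t - gamF f s₂ p q t)/(s₂ - s₁)

variable {f s₁ s₂ p q}
variable (hp : 2 ≤ p) (hq : 2 ≤ q)

section closedforms
include hp hq

lemma eta_le_p {t : ℕ} (ht : t ≤ p) : etaF f s₁ p q t = t * (1 - f*s₁)/p := by
  unfold etaF
  rw [sum_const_eq _ (fun i hi => by unfold uS; rw [if_pos (by omega)]), mul_div_assoc]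

lemma eta_ge_p {t : ℕ} (hpt : p ≤ t) (ht : t + 1 ≤ p + q) :
    etaF f s₁ p q t = (1 - f*s₁) + ((t - p : ℕ) : ℝ) * (-(1+(1-f)*s₁))/((q:ℝ)-1) := by
  obtain ⟨s, rfl⟩ := Nat.exists_eq_add_of_le hpt
  unfold etaF
  rw [Finset.sum_range_add]
  rw [sum_const_eq (c := (1 - f*s₁)/p) _ (fun i hi => by unfold uS; rw [if_pos (by omega)])]
  rw [sum_const_eq (c := (-(1+(1-f)*s₁))/((q:ℝ)-1)) _
    (fun i hi => by unfold uS; rw [if_neg (by omega), if_pos (by omega)])]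
  have hp0 : (p:ℝ) ≠ 0 := by positivity
  rw [Nat.add_sub_cancel_left]
  field_simp
  try ring

lemma eta_top : etaF f s₁ p q (p + q) = (1 - f*s₁) + (-(1+(1-f)*s₁)) := by
  have h1 : p + q = (p + q - 1) + 1 := by omega
  have h2 : etaF f s₁ p q ((p + q - 1) + 1)
      = etaF f s₁ p q (p + q - 1) + uS f s₁ p q (p + q - 1) := by
    unfold etaF; exact Finset.sum_range_succ _ _
  have h3 : uS f s₁ p q (p + q - 1) = 0 := by
    unfold uS; rw [if_neg (by omega), if_neg (by omega)]
  have h4 := eta_ge_p (f := f) (s₁ := s₁) hp hq (show p ≤ p + q - 1 by omega)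
    (show (p + q - 1) + 1 ≤ p + q by omega)
  have h5 : ((p + q - 1 - p : ℕ) : ℝ) = (q:ℝ) - 1 := by
    have h6 : p + q - 1 - p = q - 1 := by omega
    rw [h6]; push_cast [Nat.cast_sub (by omega : 1 ≤ q)]; ring
  have hq1 : (q:ℝ) - 1 ≠ 0 := by
    have : (2:ℝ) ≤ q := by exact_mod_cast hq
    linarith
  rw [h1, h2, h3, h4, h5, add_zero]
  field_simp

lemma gam_zero : gamF f s₂ p q 0 = 0 := by unfold gamF; simp

lemma eta_zero : etaF f s₁ p q 0 = 0 := by unfold etaF; simp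

lemma gam_le_p {t : ℕ} (ht1 : 1 ≤ t) (ht : t ≤ p) :
    gamF f s₂ p q t = -(((t - 1 : ℕ) : ℝ) * (f*s₂-1)/((p:ℝ)-1)) := by
  obtain ⟨s, rfl⟩ : ∃ s, t = s + 1 := ⟨t - 1, by omega⟩
  unfold gamF
  rw [Finset.sum_range_succ']
  have e0 : wS f s₂ p q 0 = 0 := by unfold wS; simp
  rw [sum_const_eq (c := (f*s₂-1)/((p:ℝ)-1)) _
    (fun i hi => by unfold wS; rw [if_neg (by omega), if_pos (by omega)])]
  rw [e0, add_zero, Nat.add_sub_cancel]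
  try ring

lemma gam_ge_p {t : ℕ} (hpt : p ≤ t) :
    gamF f s₂ p q t = -((f*s₂-1) + ((t - p : ℕ) : ℝ) * (1+(1-f)*s₂)/q) := by
  obtain ⟨s, rfl⟩ := Nat.exists_eq_add_of_le hpt
  unfold gamF
  rw [Finset.sum_range_add]
  have e1 : ∑ i ∈ range p, wS f s₂ p q i = ((p:ℝ) - 1) * ((f*s₂-1)/((p:ℝ)-1)) := by
    obtain ⟨p', hp'⟩ : ∃ p', p = p' + 1 := ⟨p - 1, by omega⟩
    have hsucc := Finset.sum_range_succ' (wS f s₂ p q) p'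
    rw [← hp'] at hsucc
    have e0 : wS f s₂ p q 0 = 0 := by unfold wS; simp
    rw [hsucc, e0, add_zero,
      sum_const_eq (c := (f*s₂-1)/((p:ℝ)-1)) _
        (fun i hi => by unfold wS; rw [if_neg (by omega), if_pos (by omega)])]
    have hcast : ((p':ℕ) : ℝ) = (p:ℝ) - 1 := by
      rw [hp']; push_cast; ring
    rw [hcast]
  have e2 : ∑ i ∈ range s, wS f s₂ p q (p + i) = s * ((1+(1-f)*s₂)/q) := by
    rw [sum_const_eq (c := (1+(1-f)*s₂)/q) _
      (fun i hi => by unfold wS; rw [if_neg (by omega), if_neg (by omega)])]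
  have hp1 : ((p:ℝ)-1) ≠ 0 := by
    have : (2:ℝ) ≤ p := by exact_mod_cast hp
    linarith
  rw [e1, e2, Nat.add_sub_cancel_left]
  field_simp
  try ring

end closedforms

section steps

variable (hA : 0 < 1 - f*s₁) (hC : 0 ≤ -(1+(1-f)*s₁))
variable (hB : 0 ≤ f*s₂ - 1) (hD : 0 < 1+(1-f)*s₂)
variable (hE1 : (p:ℝ) * (-(1+(1-f)*s₁)) ≤ ((q:ℝ)-1) * (1 - f*s₁))
variable (hE2 : (q:ℝ) * (f*s₂ - 1) ≤ ((p:ℝ)-1) * (1+(1-f)*s₂))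

include hp hq

include hA hC in
lemma u_nn : ∀ i, 0 ≤ uS f s₁ p q i := by
  have hq1 : (0:ℝ) < (q:ℝ) - 1 := by
    have : (2:ℝ) ≤ q := by exact_mod_cast hq
    linarith
  intro i
  unfold uS
  split_ifs
  · positivity
  · positivity
  · exact le_refl 0

include hA hC hE1 in
lemma u_anti : ∀ i j, i ≤ j → uS f s₁ p q j ≤ uS f s₁ p q i := by
  have hq1 : (0:ℝ) < (q:ℝ) - 1 := by
    have : (2:ℝ) ≤ q := by exact_mod_cast hq
    linarith
  have hpR : (0:ℝ) < (p:ℝ) := by positivity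
  have hstep : (-(1+(1-f)*s₁))/((q:ℝ)-1) ≤ (1 - f*s₁)/p := by
    rw [div_le_div_iff₀ hq1 hpR]
    nlinarith
  have hC' : 0 ≤ (-(1+(1-f)*s₁))/((q:ℝ)-1) := by positivity
  have hA' : 0 ≤ (1 - f*s₁)/p := by positivity
  intro i j hij
  unfold uS
  split_ifs <;> first
    | exact le_refl _
    | omega
    | exact hstep
    | exact hC'
    | exact hA'
    | exact hC'.trans hstep

include hB hD in
lemma w_nn : ∀ i, 0 ≤ wS f s₂ p q i := by
  have hp1 : (0:ℝ) < (p:ℝ) - 1 := by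
    have : (2:ℝ) ≤ p := by exact_mod_cast hp
    linarith
  intro i
  unfold wS
  split_ifs
  · exact le_refl 0
  · positivity
  · positivity

include hB hD hE2 in
lemma w_mono : ∀ i j, i ≤ j → wS f s₂ p q i ≤ wS f s₂ p q j := by
  have hp1 : (0:ℝ) < (p:ℝ) - 1 := by
    have : (2:ℝ) ≤ p := by exact_mod_cast hp
    linarith
  have hqR : (0:ℝ) < (q:ℝ) := by positivity
  have hstep : (f*s₂-1)/((p:ℝ)-1) ≤ (1+(1-f)*s₂)/q := by
    rw [div_le_div_iff₀ hp1 hqR]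
    nlinarith
  have hB' : 0 ≤ (f*s₂-1)/((p:ℝ)-1) := by positivity
  have hD' : 0 ≤ (1+(1-f)*s₂)/q := by positivity
  intro i j hij
  unfold wS
  split_ifs <;> first
    | exact le_refl _
    | omega
    | exact hstep
    | exact hB'
    | exact hD'
    | exact hB'.trans hstep

lemma u_last : uS f s₁ p q (p + q - 1) = 0 := by
  unfold uS; rw [if_neg (by omega), if_neg (by omega)]

omit hp hq in
lemma w_zero : wS f s₂ p q 0 = 0 := by unfold wS; simp

end steps

section bridge

variable (f s₁ s₂ p q)

def SetS (r : ℝ) : Set ℝ :=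
  ((fun i : ℕ => min (s₁ * r + (i : ℝ) * (1 - f * s₁) / (p : ℝ))
      (s₂ * r + ((i : ℝ) - 1) * (1 - f * s₂) / ((p : ℝ) - 1))) '' Set.Icc 1 p) ∪
  ((fun j : ℕ => min (s₁ * (r - 1) + ((j : ℝ) - 1) * (1 + (1 - f) * s₁) / ((q : ℝ) - 1))
      (s₂ * (r - 1) + (j : ℝ) * (1 + (1 - f) * s₂) / (q : ℝ))) '' Set.Icc 1 (q - 1))

lemma piPQ_eq (r : ℝ) : piPQ f s₁ s₂ p q r = sSup (SetS f s₁ s₂ p q r) := rfl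

lemma SetS_bdd (r : ℝ) : BddAbove (SetS f s₁ s₂ p q r) :=
  (((Set.finite_Icc 1 p).image _).union ((Set.finite_Icc 1 (q-1)).image _)).bddAbove

lemma SetS_ne (hp1 : 1 ≤ p) (r : ℝ) : (SetS f s₁ s₂ p q r).Nonempty :=
  ⟨_, Or.inl ⟨1, Set.mem_Icc.mpr ⟨le_refl 1, hp1⟩, rfl⟩⟩

variable {f s₁ s₂ p q}

include hp hq in
lemma formA {i : ℕ} (h1 : 1 ≤ i) (h2 : i ≤ p) (r : ℝ) :
    min (s₁ * r + (i : ℝ) * (1 - f * s₁) / (p : ℝ))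
      (s₂ * r + ((i : ℝ) - 1) * (1 - f * s₂) / ((p : ℝ) - 1))
    = min (s₁ * r + etaF f s₁ p q i) (s₂ * r + gamF f s₂ p q i) := by
  rw [eta_le_p hp hq h2, gam_le_p hp hq h1 h2]
  have hc : ((i-1:ℕ):ℝ) = (i:ℝ) - 1 := by
    rw [Nat.cast_sub h1]; norm_num
  rw [hc]
  congr 1
  ring

include hp hq in
lemma formB {j : ℕ} (h1 : 1 ≤ j) (h2 : j ≤ q - 1) (r : ℝ) :
    min (s₁ * (r - 1) + ((j : ℝ) - 1) * (1 + (1 - f) * s₁) / ((q : ℝ) - 1))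
      (s₂ * (r - 1) + (j : ℝ) * (1 + (1 - f) * s₂) / (q : ℝ))
    = min (s₁ * r + etaF f s₁ p q (p+q-j)) (s₂ * r + gamF f s₂ p q (p+q-j)) := by
  have hq1 : ((q:ℝ) - 1) ≠ 0 := by
    have : (2:ℝ) ≤ q := by exact_mod_cast hq
    linarith
  have hq0 : (q:ℝ) ≠ 0 := Nat.cast_ne_zero.mpr (by omega)
  rw [eta_ge_p hp hq (by omega) (by omega), gam_ge_p hp hq (by omega)]
  have hc1 : ((p + q - j - p : ℕ):ℝ) = (q:ℝ) - (j:ℝ) := by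
    have h3 : p + q - j - p = q - j := by omega
    rw [h3, Nat.cast_sub (by omega)]
  have hc2 : ((j:ℝ)) ≤ (q:ℝ) - 1 := by
    have : (j:ℝ) ≤ ((q-1:ℕ):ℝ) := by exact_mod_cast h2
    rw [Nat.cast_sub (by omega)] at this
    push_cast at this
    linarith
  rw [hc1]
  congr 1
  · field_simp
    ring
  · field_simp
    ring

include hp hq in
lemma anchor_memS {t : ℕ} (ht1 : 1 ≤ t) (ht : t + 1 ≤ p + q) (r : ℝ) :
    min (s₁ * r + etaF f s₁ p q t) (s₂ * r + gamF f s₂ p q t) ∈ SetS f s₁ s₂ p q r := by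
  rcases le_or_gt t p with htp | htp
  · exact Or.inl ⟨t, Set.mem_Icc.mpr ⟨ht1, htp⟩, formA hp hq ht1 htp r⟩
  · refine Or.inr ⟨p + q - t, Set.mem_Icc.mpr ⟨by omega, by omega⟩, ?_⟩
    have h3 : p + q - (p + q - t) = t := by omega
    have := formB (f:=f) (s₁:=s₁) (s₂:=s₂) (p:=p) (q:=q) hp hq (j := p + q - t) (by omega) (by omega) r
    rw [h3] at this
    exact this

include hp hq in
lemma anchor_le_piPQ {t : ℕ} (ht1 : 1 ≤ t) (ht : t + 1 ≤ p + q) (r : ℝ) :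
    min (s₁ * r + etaF f s₁ p q t) (s₂ * r + gamF f s₂ p q t) ≤ piPQ f s₁ s₂ p q r := by
  rw [piPQ_eq]
  exact le_csSup (SetS_bdd f s₁ s₂ p q r) (anchor_memS hp hq ht1 ht r)

include hp hq in
lemma piPQ_le_of {r c : ℝ}
    (h : ∀ t, 1 ≤ t → t + 1 ≤ p + q →
      min (s₁ * r + etaF f s₁ p q t) (s₂ * r + gamF f s₂ p q t) ≤ c) :
    piPQ f s₁ s₂ p q r ≤ c := by
  rw [piPQ_eq]
  apply csSup_le (SetS_ne f s₁ s₂ p q (by omega) r)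
  rintro y (⟨i, hi, rfl⟩ | ⟨j, hj, rfl⟩)
  · obtain ⟨hi1, hi2⟩ := Set.mem_Icc.mp hi
    dsimp only
    rw [formA hp hq hi1 hi2 r]
    exact h i hi1 (by omega)
  · obtain ⟨hj1, hj2⟩ := Set.mem_Icc.mp hj
    dsimp only
    rw [formB hp hq hj1 hj2 r]
    exact h (p+q-j) (by omega) (by omega)

end bridge

section envelope

variable (hA : 0 < 1 - f*s₁) (hC : 0 ≤ -(1+(1-f)*s₁))
variable (hB : 0 ≤ f*s₂ - 1) (hD : 0 < 1+(1-f)*s₂)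
variable (hE1 : (p:ℝ) * (-(1+(1-f)*s₁)) ≤ ((q:ℝ)-1) * (1 - f*s₁))
variable (hE2 : (q:ℝ) * (f*s₂ - 1) ≤ ((p:ℝ)-1) * (1+(1-f)*s₂))

include hp hq hA hB hC hD

lemma sigma_pos : 0 < s₂ - s₁ := by nlinarith

lemma eta_neg_s1 : etaF f s₁ p q (p+q) = -s₁ := by
  rw [eta_top hp hq]; ring

lemma gam_neg_s2 : gamF f s₂ p q (p+q) = -s₂ := by
  have hq0 : (q:ℝ) ≠ 0 := Nat.cast_ne_zero.mpr (by omega)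
  rw [gam_ge_p hp hq (by omega), Nat.add_sub_cancel_left]
  field_simp
  ring

lemma beta_mono {s t : ℕ} (h : s ≤ t) :
    betaF f s₁ s₂ p q s ≤ betaF f s₁ s₂ p q t := by
  have hσ := sigma_pos (p := p) (q := q) hp hq hA hC hB hD
  unfold betaF
  rw [div_le_div_iff_of_pos_right hσ]
  have h1 : etaF f s₁ p q s ≤ etaF f s₁ p q t := by
    unfold etaF
    exact Finset.sum_le_sum_of_subset_of_nonneg (Finset.range_subset_range.mpr h)
      (fun i _ _ => u_nn hp hq hA hC i)
  have h2 : gamF f s₂ p q t ≤ gamF f s₂ p q s := by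
    unfold gamF
    simp only [neg_le_neg_iff]
    exact Finset.sum_le_sum_of_subset_of_nonneg (Finset.range_subset_range.mpr h)
      (fun i _ _ => w_nn hp hq hB hD i)
  linarith

lemma beta_zero : betaF f s₁ s₂ p q 0 = 0 := by
  unfold betaF
  rw [eta_zero hp hq, gam_zero hp hq]
  simp

lemma beta_top : betaF f s₁ s₂ p q (p+q) = 1 := by
  have hσ := sigma_pos (p := p) (q := q) hp hq hA hC hB hD
  unfold betaF
  rw [eta_neg_s1 hp hq hA hC hB hD, gam_neg_s2 hp hq hA hC hB hD]
  rw [sub_neg_eq_add, div_eq_one_iff_eq hσ.ne']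
  ring

lemma VL {x : ℝ} {t : ℕ} (ht : t + 1 ≤ p + q)
    (hbx : betaF f s₁ s₂ p q t ≤ x) (hx0 : 0 ≤ x) :
    s₁ * x + etaF f s₁ p q t ≤ piPQ f s₁ s₂ p q x := by
  have hσ := sigma_pos (p := p) (q := q) hp hq hA hC hB hD
  rcases Nat.eq_zero_or_pos t with rfl | ht1
  · rw [eta_zero hp hq, add_zero]
    refine le_trans (le_min ?_ ?_) (anchor_le_piPQ hp hq (le_refl 1) (by omega) x)
    · rw [eta_le_p hp hq (by omega : 1 ≤ p)]
      have : (0:ℝ) ≤ (1:ℕ) * (1 - f*s₁)/p := by positivity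
      push_cast at this ⊢
      linarith
    · rw [gam_le_p hp hq (le_refl 1) (by omega : 1 ≤ p)]
      norm_num
      nlinarith [mul_nonneg hσ.le hx0]
  · have hLM : s₁ * x + etaF f s₁ p q t ≤ s₂ * x + gamF f s₂ p q t := by
      have h2 : etaF f s₁ p q t - gamF f s₂ p q t ≤ x * (s₂ - s₁) :=
        (div_le_iff₀ hσ).mp hbx
      nlinarith [h2]
    calc s₁ * x + etaF f s₁ p q t
        = min (s₁ * x + etaF f s₁ p q t) (s₂ * x + gamF f s₂ p q t) :=
          (min_eq_left hLM).symm
      _ ≤ piPQ f s₁ s₂ p q x := anchor_le_piPQ hp hq ht1 ht x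

lemma VR {x : ℝ} {t : ℕ} (ht1 : 1 ≤ t) (ht : t ≤ p + q)
    (hxb : x ≤ betaF f s₁ s₂ p q t) (hx1 : x ≤ 1) :
    s₂ * x + gamF f s₂ p q t ≤ piPQ f s₁ s₂ p q x := by
  have hσ := sigma_pos (p := p) (q := q) hp hq hA hC hB hD
  have hqR : (0:ℝ) < q := by
    have : (2:ℝ) ≤ q := by exact_mod_cast hq
    linarith
  rcases eq_or_lt_of_le ht with rfl | htN
  · -- t = p + q : use anchor p+q-1
    rw [gam_neg_s2 hp hq hA hC hB hD]
    have hqm : ((p + q - 1 - p : ℕ):ℝ) = (q:ℝ) - 1 := by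
      have h3 : p + q - 1 - p = q - 1 := by omega
      rw [h3, Nat.cast_sub (by omega)]
      norm_num
    have heta : etaF f s₁ p q (p+q-1) = -s₁ := by
      rw [eta_ge_p hp hq (by omega) (by omega), hqm]
      have hq1 : ((q:ℝ) - 1) ≠ 0 := by
        have : (2:ℝ) ≤ q := by exact_mod_cast hq
        linarith
      field_simp
      ring
    have hgam : gamF f s₂ p q (p+q-1)
        = -((f*s₂-1) + ((q:ℝ)-1) * (1+(1-f)*s₂)/q) := by
      rw [gam_ge_p hp hq (by omega), hqm]
    refine le_trans (le_min ?_ ?_) (anchor_le_piPQ hp hq (t := p+q-1) (by omega) (by omega) x)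
    · rw [heta]
      nlinarith [mul_nonneg hσ.le (by linarith : (0:ℝ) ≤ 1 - x)]
    · rw [hgam]
      have hdq : ((q:ℝ)-1) * (1+(1-f)*s₂)/q ≤ (1+(1-f)*s₂) := by
        rw [div_le_iff₀ hqR]
        nlinarith
      nlinarith
  · have hLM : s₂ * x + gamF f s₂ p q t ≤ s₁ * x + etaF f s₁ p q t := by
      have h2 : x * (s₂ - s₁) ≤ etaF f s₁ p q t - gamF f s₂ p q t :=
        (le_div_iff₀ hσ).mp hxb
      nlinarith [h2]
    calc s₂ * x + gamF f s₂ p q t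
        = min (s₁ * x + etaF f s₁ p q t) (s₂ * x + gamF f s₂ p q t) :=
          (min_eq_right hLM).symm
      _ ≤ piPQ f s₁ s₂ p q x := anchor_le_piPQ hp hq ht1 (by omega) x

lemma select {x : ℝ} (hx0 : 0 ≤ x) (hx1 : x < 1) :
    ∃ t, 1 ≤ t ∧ t ≤ p + q ∧ betaF f s₁ s₂ p q (t-1) ≤ x ∧ x ≤ betaF f s₁ s₂ p q t := by
  classical
  have hex : ∃ t, x ≤ betaF f s₁ s₂ p q t :=
    ⟨p+q, by rw [beta_top hp hq hA hC hB hD]; exact hx1.le⟩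
  have ht₀ : x ≤ betaF f s₁ s₂ p q (Nat.find hex) := Nat.find_spec hex
  have ht₀N : Nat.find hex ≤ p + q :=
    Nat.find_min' hex (by rw [beta_top hp hq hA hC hB hD]; exact hx1.le)
  rcases Nat.eq_zero_or_pos (Nat.find hex) with h0 | h1
  · refine ⟨1, le_refl 1, by omega, ?_, ?_⟩
    · show betaF f s₁ s₂ p q 0 ≤ x
      rw [beta_zero hp hq hA hC hB hD]
      exact hx0
    · have h2 : x ≤ betaF f s₁ s₂ p q 0 := by rw [← h0]; exact ht₀
      exact h2.trans (beta_mono hp hq hA hC hB hD (by omega))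
  · refine ⟨Nat.find hex, h1, ht₀N, ?_, ht₀⟩
    have h2 := Nat.find_min hex (show Nat.find hex - 1 < Nat.find hex by omega)
    exact (not_le.mp h2).le

include hE1 hE2

lemma env_core {t : ℕ} (ht1 : 1 ≤ t) (ht : t ≤ p + q) :
    0 ≤ s₂ * etaF f s₁ p q (t-1) + (-s₁) * gamF f s₂ p q t := by
  have hp1 : (0:ℝ) < (p:ℝ) - 1 := by
    have : (2:ℝ) ≤ p := by exact_mod_cast hp
    linarith
  have hq1 : (0:ℝ) < (q:ℝ) - 1 := by
    have : (2:ℝ) ≤ q := by exact_mod_cast hq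
    linarith
  have hpR : (0:ℝ) < p := by positivity
  have hqR : (0:ℝ) < q := by positivity
  rcases le_or_gt t p with htp | htp
  · -- A side
    obtain ⟨s, rfl⟩ : ∃ s, t = s + 1 := ⟨t - 1, by omega⟩
    rw [Nat.add_sub_cancel, eta_le_p hp hq (by omega), gam_le_p hp hq (by omega) htp,
      Nat.add_sub_cancel]
    have X1 : (-s₁) * (f*s₂ - 1) * p ≤ s₂ * (1 - f*s₁) * ((p:ℝ)-1) := by
      nlinarith [mul_nonneg hA.le (sub_nonneg.mpr hE2), mul_nonneg hB (sub_nonneg.mpr hE1)]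
    have X1' : (-s₁) * ((f*s₂-1)/((p:ℝ)-1)) ≤ s₂ * ((1 - f*s₁)/p) := by
      rw [mul_div_assoc', mul_div_assoc', div_le_div_iff₀ hp1 hpR]
      nlinarith [X1]
    have hs0 : (0:ℝ) ≤ (s:ℕ) := Nat.cast_nonneg s
    have hring : s₂ * ((s:ℝ) * (1 - f*s₁)/p) + (-s₁) * (-((s:ℝ) * (f*s₂-1)/((p:ℝ)-1)))
        = (s:ℝ) * (s₂ * ((1 - f*s₁)/p) - (-s₁) * ((f*s₂-1)/((p:ℝ)-1))) := by ring
    rw [hring]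
    exact mul_nonneg hs0 (by linarith [X1'])
  · -- B side
    have X3 : (q:ℝ) * s₂ * (-(1+(1-f)*s₁)) ≤ ((q:ℝ)-1) * (-s₁) * (1+(1-f)*s₂) := by
      nlinarith [mul_nonneg hD.le (sub_nonneg.mpr hE1), mul_nonneg hC (sub_nonneg.mpr hE2)]
    rw [eta_ge_p hp hq (by omega) (by omega), gam_ge_p hp hq (by omega)]
    have hz0 : (0:ℝ) ≤ ((p + q - t : ℕ):ℝ) := Nat.cast_nonneg _
    have hx : ((t - 1 - p : ℕ):ℝ) = (q:ℝ) - 1 - ((p + q - t : ℕ):ℝ) := by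
      rw [show (t - 1 - p : ℕ) = (q - 1) - (p + q - t) by omega]
      rw [Nat.cast_sub (by omega), Nat.cast_sub (by omega)]
      push_cast
      ring
    have hy : ((t - p : ℕ):ℝ) = (q:ℝ) - ((p + q - t : ℕ):ℝ) := by
      rw [show (t - p : ℕ) = q - (p + q - t) by omega]
      rw [Nat.cast_sub (by omega)]
    rw [hx, hy]
    have hkey : s₂ * ((1 - f*s₁) + ((q:ℝ) - 1 - ((p + q - t : ℕ):ℝ)) * (-(1+(1-f)*s₁))/((q:ℝ)-1))
        + (-s₁) * (-((f*s₂-1) + ((q:ℝ) - ((p + q - t : ℕ):ℝ)) * (1+(1-f)*s₂)/q))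
        = ((p + q - t : ℕ):ℝ) *
            (((q:ℝ)-1) * (-s₁) * (1+(1-f)*s₂) - (q:ℝ) * s₂ * (-(1+(1-f)*s₁)))
            / (q * ((q:ℝ)-1)) := by
      field_simp
      ring
    rw [hkey]
    apply div_nonneg
    · exact mul_nonneg hz0 (by linarith)
    · positivity

end envelope

section assembly

variable (hA : 0 < 1 - f*s₁) (hC : 0 ≤ -(1+(1-f)*s₁))
variable (hB : 0 ≤ f*s₂ - 1) (hD : 0 < 1+(1-f)*s₂)
variable (hE1 : (p:ℝ) * (-(1+(1-f)*s₁)) ≤ ((q:ℝ)-1) * (1 - f*s₁))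
variable (hE2 : (q:ℝ) * (f*s₂ - 1) ≤ ((p:ℝ)-1) * (1+(1-f)*s₂))

include hp hq hA hB hC hD hE1 hE2

lemma key_inst (t₁ t₂ k τ : ℕ) (ht₁1 : 1 ≤ t₁) (ht₁N : t₁ ≤ p + q)
    (ht₂1 : 1 ≤ t₂) (ht₂N : t₂ ≤ p + q) (hk1 : 1 ≤ k) (hkN : k + 1 ≤ p + q) (hτ : τ ≤ 1) :
    etaF f s₁ p q k + (τ:ℝ) * (-s₁) ≤ etaF f s₁ p q (t₁-1) + etaF f s₁ p q (t₂-1)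
    ∨ gamF f s₂ p q k - (τ:ℝ) * s₂ ≤ gamF f s₂ p q t₁ + gamF f s₂ p q t₂ := by
  obtain ⟨l₁, rfl⟩ : ∃ l, t₁ = l + 1 := ⟨t₁ - 1, by omega⟩
  obtain ⟨l₂, rfl⟩ : ∃ l, t₂ = l + 1 := ⟨t₂ - 1, by omega⟩
  rw [Nat.add_sub_cancel, Nat.add_sub_cancel]
  have h := key (uS f s₁ p q) (wS f s₂ p q) (p+q)
    (u_nn hp hq hA hC) (u_anti hp hq hA hC hE1) (u_last hp hq)
    (w_nn hp hq hB hD) (w_mono hp hq hB hD hE2) w_zero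
    l₁ l₂ k τ ht₁N ht₂N hk1 hkN hτ
  have eu : ∑ i ∈ range (p+q), uS f s₁ p q i = -s₁ :=
    eta_neg_s1 hp hq hA hC hB hD
  have ew : ∑ i ∈ range (p+q), wS f s₂ p q i = s₂ := by
    have := gam_neg_s2 (p := p) (q := q) hp hq hA hC hB hD
    unfold gamF at this
    linarith
  rcases h with h' | h'
  · left
    rw [eu] at h'
    exact h'
  · right
    rw [ew] at h'
    unfold gamF
    linarith

lemma subadd_core {x y : ℝ} (hx0 : 0 ≤ x) (hx1 : x < 1) (hy0 : 0 ≤ y) (hy1 : y < 1)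
    (τ : ℕ) (hτ : τ ≤ 1) :
    piPQ f s₁ s₂ p q (x + y - τ) ≤ piPQ f s₁ s₂ p q x + piPQ f s₁ s₂ p q y := by
  obtain ⟨t₁, ht₁1, ht₁N, hbx, hxb⟩ := select hp hq hA hC hB hD hx0 hx1
  obtain ⟨t₂, ht₂1, ht₂N, hby, hyb⟩ := select hp hq hA hC hB hD hy0 hy1
  apply piPQ_le_of hp hq
  intro k hk1 hkN
  rcases key_inst hp hq hA hC hB hD hE1 hE2 t₁ t₂ k τ ht₁1 ht₁N ht₂1 ht₂N hk1 hkN hτ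
    with hD1 | hD2
  · calc min (s₁ * (x + y - τ) + etaF f s₁ p q k) (s₂ * (x + y - τ) + gamF f s₂ p q k)
        ≤ s₁ * (x + y - τ) + etaF f s₁ p q k := min_le_left _ _
      _ ≤ (s₁ * x + etaF f s₁ p q (t₁-1)) + (s₁ * y + etaF f s₁ p q (t₂-1)) := by
          have hr : s₁ * (x + y - (τ:ℝ)) = s₁*x + s₁*y - (τ:ℝ)*s₁ := by ring
          rw [hr]
          have hr2 : (τ:ℝ) * (-s₁) = -((τ:ℝ)*s₁) := by ring
          rw [hr2] at hD1
          linarith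
      _ ≤ piPQ f s₁ s₂ p q x + piPQ f s₁ s₂ p q y :=
          add_le_add (VL hp hq hA hC hB hD (by omega) hbx hx0)
            (VL hp hq hA hC hB hD (by omega) hby hy0)
  · calc min (s₁ * (x + y - τ) + etaF f s₁ p q k) (s₂ * (x + y - τ) + gamF f s₂ p q k)
        ≤ s₂ * (x + y - τ) + gamF f s₂ p q k := min_le_right _ _
      _ ≤ (s₂ * x + gamF f s₂ p q t₁) + (s₂ * y + gamF f s₂ p q t₂) := by
          have hr : s₂ * (x + y - (τ:ℝ)) = s₂*x + s₂*y - (τ:ℝ)*s₂ := by ring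
          rw [hr]
          linarith
      _ ≤ piPQ f s₁ s₂ p q x + piPQ f s₁ s₂ p q y :=
          add_le_add (VR hp hq hA hC hB hD ht₁1 ht₁N hxb hx1.le)
            (VR hp hq hA hC hB hD ht₂1 ht₂N hyb hy1.le)

lemma nonneg_core {x : ℝ} (hx0 : 0 ≤ x) (hx1 : x < 1) : 0 ≤ piPQ f s₁ s₂ p q x := by
  obtain ⟨t, ht1, htN, hbx, hxb⟩ := select hp hq hA hC hB hD hx0 hx1
  have h1 := VL hp hq hA hC hB hD (t := t-1) (by omega) hbx hx0
  have h2 := VR hp hq hA hC hB hD ht1 htN hxb hx1.le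
  have h3 := env_core hp hq hA hC hB hD hE1 hE2 ht1 htN
  have hσ := sigma_pos (p := p) (q := q) hp hq hA hC hB hD
  have hs2pos : 0 < s₂ := by nlinarith
  have hs1neg : 0 < -s₁ := by nlinarith
  nlinarith [mul_le_mul_of_nonneg_left h1 hs2pos.le,
    mul_le_mul_of_nonneg_left h2 hs1neg.le]

lemma gam_nonpos (t : ℕ) : gamF f s₂ p q t ≤ 0 := by
  unfold gamF
  simp only [neg_nonpos]
  exact Finset.sum_nonneg (fun i _ => w_nn hp hq hB hD i)

lemma at_zero : piPQ f s₁ s₂ p q 0 = 0 := by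
  have hpR : (0:ℝ) < p := by positivity
  apply le_antisymm
  · apply piPQ_le_of hp hq
    intro t ht1 htN
    refine (min_le_right _ _).trans ?_
    rw [mul_zero, zero_add]
    exact gam_nonpos hp hq hA hC hB hD hE1 hE2 t
  · have h := anchor_le_piPQ (f:=f) (s₁:=s₁) (s₂:=s₂) (p:=p) (q:=q) (t := 1) hp hq (le_refl 1) (by omega) (r := 0)
    have e1 : etaF f s₁ p q 1 = (1:ℕ) * (1 - f*s₁)/p := eta_le_p hp hq (by omega)
    have e2 : gamF f s₂ p q 1 = -(((1-1:ℕ):ℝ) * (f*s₂-1)/((p:ℝ)-1)) :=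
      gam_le_p hp hq (le_refl 1) (by omega)
    have e2' : gamF f s₂ p q 1 = 0 := by rw [e2]; norm_num
    have hval : min (s₁ * 0 + etaF f s₁ p q 1) (s₂ * 0 + gamF f s₂ p q 1) = 0 := by
      rw [e2', e1, mul_zero, mul_zero, zero_add, zero_add]
      push_cast
      rw [one_mul, min_eq_right (by positivity)]
    rw [hval] at h
    exact h

lemma at_f (hf0 : 0 < f) (hf1 : f < 1) : piPQ f s₁ s₂ p q f = 1 := by
  have hpR : (0:ℝ) < p := by positivity
  have hqR : (0:ℝ) < q := by positivity
  apply le_antisymm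
  · apply piPQ_le_of hp hq
    intro t ht1 htN
    rcases le_or_gt t p with htp | htp
    · refine (min_le_left _ _).trans ?_
      rw [eta_le_p hp hq htp]
      have htcast : (t:ℝ) ≤ (p:ℝ) := by exact_mod_cast htp
      have hdiv : (t:ℝ) * (1 - f*s₁)/p ≤ (1 - f*s₁) := by
        rw [div_le_iff₀ hpR]
        nlinarith
      nlinarith
    · refine (min_le_right _ _).trans ?_
      rw [gam_ge_p hp hq (by omega)]
      have hc : (0:ℝ) ≤ ((t - p : ℕ):ℝ) * (1+(1-f)*s₂)/q := by positivity
      nlinarith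
  · have h := anchor_le_piPQ (f:=f) (s₁:=s₁) (s₂:=s₂) (p:=p) (q:=q) (t := p) hp hq (by omega) (by omega) (r := f)
    have e1 : etaF f s₁ p q p = (p:ℝ) * (1 - f*s₁)/p := eta_le_p hp hq (le_refl p)
    have e2 : gamF f s₂ p q p = -(((p-1:ℕ):ℝ) * (f*s₂-1)/((p:ℝ)-1)) :=
      gam_le_p hp hq (by omega) (le_refl p)
    have e1' : etaF f s₁ p q p = 1 - f*s₁ := by
      rw [e1]; field_simp
    have e2' : gamF f s₂ p q p = -(f*s₂-1) := by
      rw [e2]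
      have hc : ((p-1:ℕ):ℝ) = (p:ℝ)-1 := by
        rw [Nat.cast_sub (by omega)]; norm_num
      rw [hc]
      have hp1 : ((p:ℝ)-1) ≠ 0 := by
        have : (2:ℝ) ≤ p := by exact_mod_cast hp
        linarith
      field_simp
    rw [e1', e2'] at h
    have hmin : min (s₁ * f + (1 - f*s₁)) (s₂ * f + -(f*s₂-1)) = 1 := by
      have : s₁ * f + (1 - f*s₁) = 1 := by ring
      have h2 : s₂ * f + -(f*s₂-1) = 1 := by ring
      rw [this, h2, min_self]
    rw [hmin] at h
    exact h

end assembly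

end

end GJaux

/-- For `f ∈ (0,1)`, integers `p, q ≥ 2`, and `(s₁, s₂) ∈ D_f^{p,q}`,
the periodic extension `π̃(r) = π_{f,s₁,s₂}^{p,q}(r - ⌊r⌋)` is a valid cut
generating function for `f`. -/
theorem stmt3 (f : ℝ) (hf : f ∈ Set.Ioo (0 : ℝ) 1) (p q : ℕ) (hp : 2 ≤ p) (hq : 2 ≤ q)
    (s₁ s₂ : ℝ) (hs : (s₁, s₂) ∈ Dset f p q) :
    (∀ r, 0 ≤ piPQ f s₁ s₂ p q (Int.fract r)) ∧
    piPQ f s₁ s₂ p q (Int.fract 0) = 0 ∧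
    piPQ f s₁ s₂ p q (Int.fract f) = 1 ∧
    (∀ r r', piPQ f s₁ s₂ p q (Int.fract (r + r')) ≤
      piPQ f s₁ s₂ p q (Int.fract r) + piPQ f s₁ s₂ p q (Int.fract r')) ∧
    (∀ (r : ℝ) (w : ℤ), piPQ f s₁ s₂ p q (Int.fract (r + w)) = piPQ f s₁ s₂ p q (Int.fract r)) := by
  obtain ⟨hf0, hf1⟩ := hf
  have hf1' : f - 1 < 0 := by linarith
  obtain ⟨hsA, hsB⟩ := hs
  simp only at hsA hsB
  have hs1top : s₁ ≤ 1/(f-1) := by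
    by_cases hc : ((p:ℝ) + q - 1) * f - p < 0
    · rw [if_pos hc] at hsA; exact hsA.2
    · rw [if_neg hc] at hsA; exact hsA
  have hs2bot : 1/f ≤ s₂ := by
    by_cases hc : ((p:ℝ) + q - 1) * (1-f) - q < 0
    · rw [if_pos hc] at hsB; exact hsB.1
    · rw [if_neg hc] at hsB; exact hsB
  have h1 : 1 ≤ s₁ * (f - 1) := by
    have h := mul_le_mul_of_nonpos_right hs1top (le_of_lt hf1')
    have h2 : (1/(f-1))*(f-1) = 1 := one_div_mul_cancel (ne_of_lt hf1')
    linarith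
  have hC : 0 ≤ -(1+(1-f)*s₁) := by nlinarith [h1]
  have hs1neg : s₁ < 0 := by nlinarith [h1]
  have hA : 0 < 1 - f*s₁ := by nlinarith [mul_pos hf0 (neg_pos.mpr hs1neg)]
  have h2 : 1 ≤ f * s₂ := by
    have h := mul_le_mul_of_nonneg_left hs2bot hf0.le
    have h2' : f * (1/f) = 1 := mul_one_div_cancel (ne_of_gt hf0)
    linarith
  have hB : 0 ≤ f*s₂ - 1 := by linarith
  have hs2pos : 0 < s₂ := by nlinarith
  have hD : 0 < 1+(1-f)*s₂ := by nlinarith [mul_pos (by linarith : (0:ℝ) < 1-f) hs2pos]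
  have hE1 : (p:ℝ) * (-(1+(1-f)*s₁)) ≤ ((q:ℝ)-1) * (1 - f*s₁) := by
    by_cases hc : ((p:ℝ) + q - 1) * f - p < 0
    · rw [if_pos hc] at hsA
      have hlo := hsA.1
      have hprod : s₁ * (((p:ℝ)+q-1)*f - p) ≤ (p:ℝ)+q-1 := by
        have h := mul_le_mul_of_nonpos_right hlo (le_of_lt hc)
        have heq : (((p:ℝ)+q-1)/(((p:ℝ)+q-1)*f-p)) * (((p:ℝ)+q-1)*f-p)
            = (p:ℝ)+q-1 := div_mul_cancel₀ _ (ne_of_lt hc)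
        linarith
      nlinarith [hprod]
    · push_neg at hc
      nlinarith [mul_nonneg (neg_nonneg.mpr hs1neg.le) hc]
  have hE2 : (q:ℝ) * (f*s₂ - 1) ≤ ((p:ℝ)-1) * (1+(1-f)*s₂) := by
    by_cases hc : ((p:ℝ) + q - 1) * (1-f) - q < 0
    · rw [if_pos hc] at hsB
      have hhi := hsB.2
      have hprod : s₂ * ((q:ℝ) - ((p:ℝ)+q-1)*(1-f)) ≤ ((p:ℝ)+q-1) := by
        have hposd : 0 < (q:ℝ) - ((p:ℝ)+q-1)*(1-f) := by linarith
        have h := mul_le_mul_of_nonneg_right hhi (le_of_lt hposd)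
        have heq : (((p:ℝ)+q-1)/((q:ℝ)-((p:ℝ)+q-1)*(1-f))) * ((q:ℝ)-((p:ℝ)+q-1)*(1-f))
            = (p:ℝ)+q-1 := div_mul_cancel₀ _ (ne_of_gt hposd)
        linarith
      nlinarith [hprod]
    · push_neg at hc
      nlinarith [mul_nonneg hs2pos.le (by linarith : (0:ℝ) ≤ ((p:ℝ)+q-1)*(1-f) - q)]
  refine ⟨?_, ?_, ?_, ?_, ?_⟩
  · intro r
    exact GJaux.nonneg_core hp hq hA hC hB hD hE1 hE2 (Int.fract_nonneg r) (Int.fract_lt_one r)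
  · rw [show Int.fract (0:ℝ) = 0 from Int.fract_zero]
    exact GJaux.at_zero hp hq hA hC hB hD hE1 hE2
  · rw [Int.fract_eq_self.mpr ⟨hf0.le, hf1⟩]
    exact GJaux.at_f hp hq hA hC hB hD hE1 hE2 hf0 hf1
  · intro r r'
    have hx0 := Int.fract_nonneg r
    have hx1 := Int.fract_lt_one r
    have hy0 := Int.fract_nonneg r'
    have hy1 := Int.fract_lt_one r'
    have hsum : Int.fract (r + r') = Int.fract (Int.fract r + Int.fract r') := by
      have h2 : r + r' = (Int.fract r + Int.fract r') + ((⌊r⌋ + ⌊r'⌋ : ℤ):ℝ) := by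
        push_cast
        linarith [Int.fract_add_floor r, Int.fract_add_floor r']
      rw [h2, Int.fract_add_intCast]
    rw [hsum]
    rcases lt_or_ge (Int.fract r + Int.fract r') 1 with hlt | hge
    · rw [Int.fract_eq_self.mpr ⟨by linarith, hlt⟩]
      have h := GJaux.subadd_core hp hq hA hC hB hD hE1 hE2 hx0 hx1 hy0 hy1 0 (by omega)
      simpa using h
    · have heq : Int.fract (Int.fract r + Int.fract r')
          = Int.fract r + Int.fract r' - 1 := by
        have ha : Int.fract ((Int.fract r + Int.fract r' - 1) + ((1:ℤ):ℝ))
            = Int.fract (Int.fract r + Int.fract r' - 1) := Int.fract_add_intCast _ _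
        have hb : (Int.fract r + Int.fract r' - 1) + ((1:ℤ):ℝ)
            = Int.fract r + Int.fract r' := by push_cast; ring
        rw [hb] at ha
        rw [ha]
        exact Int.fract_eq_self.mpr ⟨by linarith, by linarith⟩
      rw [heq]
      have h := GJaux.subadd_core hp hq hA hC hB hD hE1 hE2 hx0 hx1 hy0 hy1 1 (le_refl 1)
      simpa using h
  · intro r w
    rw [Int.fract_add_intCast]
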